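/- arXiv:1308.1900 — 4 statements merged into one kernel-verified Lean document; each statement's English description precedes it below -/
import Mathlib

section
/- Let (Ω,F,P) be a measure space, P₀ and P₁ two probability measures with P₁ absolutely continuous with respect to P₀, and let L = dP₁/dP₀ be the Radon–Nikodym derivative. Fix c > 0 and set R* = {L ≥ c}. Then for every measurable set R with P₀(R) ≤ P₀(R*), one has P₁(R) ≤ P₁(R*). -/
open MeasureTheory
open scoped ENNReal

theorem neyman_pearson {Ω : Type*} [MeasurableSpace Ω]
    (P₀ P₁ : Measure Ω) [IsProbabilityMeasure P₀] [IsProbabilityMeasure P₁]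
    (hac : P₁ ≪ P₀) (c : ℝ≥0∞) (hc : 0 < c)
    (Rstar : Set Ω) (hRstar : Rstar = {ω | c ≤ P₁.rnDeriv P₀ ω})
    (R : Set Ω) (hR : MeasurableSet R) (hle : P₀ R ≤ P₀ Rstar) :
    P₁ R ≤ P₁ Rstar := by
  set L := P₁.rnDeriv P₀ with hL
  have hLmeas : Measurable L := Measure.measurable_rnDeriv _ _
  have hRsm : MeasurableSet Rstar := by
    rw [hRstar]
    exact hLmeas measurableSet_Ici
  have hrepr : ∀ A : Set Ω, MeasurableSet A → P₁ A = ∫⁻ ω in A, L ω ∂P₀ := by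
    intro A hA
    rw [← Measure.withDensity_rnDeriv_eq P₁ P₀ hac, withDensity_apply _ hA]
  -- bound on R \ Rstar : L < c there
  have h1 : P₁ (R \ Rstar) ≤ c * P₀ (R \ Rstar) := by
    rw [hrepr _ (hR.diff hRsm)]
    calc ∫⁻ ω in R \ Rstar, L ω ∂P₀ ≤ ∫⁻ _ in R \ Rstar, c ∂P₀ := by
          refine setLIntegral_mono measurable_const ?_
          intro ω hω
          have : ¬ c ≤ L ω := by
            intro h
            exact hω.2 (hRstar ▸ h)
          exact le_of_lt (lt_of_not_ge this)
      _ = c * P₀ (R \ Rstar) := by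
          rw [setLIntegral_const]
  -- bound on Rstar \ R : c ≤ L there
  have h2 : c * P₀ (Rstar \ R) ≤ P₁ (Rstar \ R) := by
    rw [hrepr _ (hRsm.diff hR)]
    calc c * P₀ (Rstar \ R) = ∫⁻ _ in Rstar \ R, c ∂P₀ := by
          rw [setLIntegral_const]
      _ ≤ ∫⁻ ω in Rstar \ R, L ω ∂P₀ := by
          refine setLIntegral_mono hLmeas ?_
          intro ω hω
          have := hω.1; rw [hRstar] at this; exact this
  -- from hle: P₀ (R \ Rstar) ≤ P₀ (Rstar \ R)
  have h3 : P₀ (R \ Rstar) ≤ P₀ (Rstar \ R) := by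
    have e1 : P₀ (R ∩ Rstar) + P₀ (R \ Rstar) = P₀ R :=
      measure_inter_add_diff R hRsm
    have e2 : P₀ (Rstar ∩ R) + P₀ (Rstar \ R) = P₀ Rstar :=
      measure_inter_add_diff Rstar hR
    have hfin : P₀ (R ∩ Rstar) ≠ ∞ := measure_ne_top _ _
    have : P₀ (R ∩ Rstar) + P₀ (R \ Rstar) ≤ P₀ (R ∩ Rstar) + P₀ (Rstar \ R) := by
      rw [e1, Set.inter_comm R Rstar, e2]
      exact hle
    exact (ENNReal.add_le_add_iff_left hfin).mp this
  have h4 : P₁ (R \ Rstar) ≤ P₁ (Rstar \ R) :=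
    h1.trans ((mul_le_mul_right h3 c).trans h2)
  calc P₁ R = P₁ (R ∩ Rstar) + P₁ (R \ Rstar) := (measure_inter_add_diff R hRsm).symm
    _ ≤ P₁ (R ∩ Rstar) + P₁ (Rstar \ R) := add_le_add_right h4 _
    _ = P₁ (Rstar ∩ R) + P₁ (Rstar \ R) := by rw [Set.inter_comm]
    _ = P₁ Rstar := measure_inter_add_diff Rstar hR
end

section
/- Fix θ₁ > θ₀ > 0 and M > 0, and let c(ε) = (M/2)·(−√(ε(θ₁²−θ₀²)+θ₁²) + ε(θ₁−θ₀) + θ₁) for ε > ε₋ := −θ₁²/(θ₁²−θ₀²), and c(ε)=+∞ otherwise. Then for every η < (θ₁−θ₀)M/2, the Legendre–Fenchel transform I(η) = sup_{ε>ε₋} (εη − c(ε)) equals −(4θ₁η − (θ₁−θ₀)²M)² / (8(2η − (θ₁−θ₀)M)(θ₁²−θ₀²)), and for η ≥ (θ₁−θ₀)M/2 the supremum is +∞. -/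
theorem legendre_fenchel_transform_of_cgf (θ₀ θ₁ M : ℝ)
    (h0 : 0 < θ₀) (h1 : θ₀ < θ₁) (hM : 0 < M) :
    let εminus : ℝ := -θ₁^2/(θ₁^2-θ₀^2)
    let c : ℝ → ℝ := fun ε =>
      (M/2) * (-Real.sqrt (ε*(θ₁^2-θ₀^2)+θ₁^2) + ε*(θ₁-θ₀) + θ₁)
    (∀ η : ℝ, η < (θ₁-θ₀)*M/2 →
      sSup {x : ℝ | ∃ ε, εminus < ε ∧ x = ε*η - c ε}
        = -(4*θ₁*η - (θ₁-θ₀)^2*M)^2 / (8*(2*η-(θ₁-θ₀)*M)*(θ₁^2-θ₀^2))) ∧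
    (∀ η : ℝ, (θ₁-θ₀)*M/2 ≤ η →
      ¬ BddAbove {x : ℝ | ∃ ε, εminus < ε ∧ x = ε*η - c ε}) := by
  intro εminus c
  have hD : (0:ℝ) < θ₁^2 - θ₀^2 := by nlinarith
  constructor
  · intro η hη
    have hB : 2*η - (θ₁-θ₀)*M < 0 := by linarith
    have hBne : 2*η - (θ₁-θ₀)*M ≠ 0 := ne_of_lt hB
    have hDne : θ₁^2 - θ₀^2 ≠ 0 := ne_of_gt hD
    set B : ℝ := 2*η - (θ₁-θ₀)*M with hBdef
    set ustar : ℝ := -(M*(θ₁^2-θ₀^2))/(2*B) with hustar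
    have hupos : 0 < ustar := by
      rw [hustar]
      apply div_pos_of_neg_of_neg
      · nlinarith
      · linarith
    set εstar : ℝ := (ustar^2 - θ₁^2)/(θ₁^2-θ₀^2) with hεstar
    have hden : 8*B*(θ₁^2-θ₀^2) < 0 := by nlinarith
    apply IsGreatest.csSup_eq
    constructor
    · refine ⟨εstar, ?_, ?_⟩
      · show -θ₁^2/(θ₁^2-θ₀^2) < εstar
        rw [hεstar, div_lt_div_iff₀ hD hD]
        nlinarith [sq_nonneg ustar, pow_pos hupos 2]
      · have hsq : εstar*(θ₁^2-θ₀^2)+θ₁^2 = ustar^2 := by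
          rw [hεstar]; field_simp; ring
        have hsqrt : Real.sqrt (εstar*(θ₁^2-θ₀^2)+θ₁^2) = ustar := by
          rw [hsq, Real.sqrt_sq hupos.le]
        show _ = εstar*η - c εstar
        simp only [c, hsqrt]
        rw [hεstar, hustar]
        field_simp [hBne]
        ring
    · rintro x ⟨ε, hε, rfl⟩
      have hε' : -θ₁^2 < ε * (θ₁^2-θ₀^2) := by
        rw [← div_lt_iff₀ hD]; exact hε
      have hpos : 0 < ε*(θ₁^2-θ₀^2)+θ₁^2 := by linarith
      set u : ℝ := Real.sqrt (ε*(θ₁^2-θ₀^2)+θ₁^2) with hu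
      have hu2 : u^2 = ε*(θ₁^2-θ₀^2)+θ₁^2 := Real.sq_sqrt hpos.le
      show ε*η - c ε ≤ _
      simp only [c, ← hu]
      rw [le_div_iff_of_neg hden]
      have key : (ε*η - M/2*(-u + ε*(θ₁-θ₀) + θ₁)) * (8*B*(θ₁^2-θ₀^2))
          + (4*θ₁*η - (θ₁-θ₀)^2*M)^2 = (2*B*u + M*(θ₁^2-θ₀^2))^2 := by
        rw [hBdef]
        linear_combination -(2*(2*η-(θ₁-θ₀)*M))^2 * hu2
      nlinarith [sq_nonneg (2*B*u + M*(θ₁^2-θ₀^2)), key]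
  · intro η hη
    rintro ⟨b, hb⟩
    set t : ℝ := max θ₁ (2*b/M + θ₁ + 1) with ht
    have ht1 : θ₁ ≤ t := le_max_left _ _
    have ht2 : 2*b/M + θ₁ + 1 ≤ t := le_max_right _ _
    have htpos : 0 < t := lt_of_lt_of_le (lt_trans h0 h1) ht1
    set ε : ℝ := (t^2 - θ₁^2)/(θ₁^2-θ₀^2) with hε
    have hεnn : 0 ≤ ε := by
      apply div_nonneg _ hD.le
      nlinarith
    have hmem : ε*η - c ε ∈ {x : ℝ | ∃ ε', εminus < ε' ∧ x = ε'*η - c ε'} := by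
      refine ⟨ε, ?_, rfl⟩
      show -θ₁^2/(θ₁^2-θ₀^2) < ε
      rw [hε, div_lt_div_iff₀ hD hD]
      nlinarith [mul_pos (pow_pos htpos 2) hD]
    have hsq : ε*(θ₁^2-θ₀^2)+θ₁^2 = t^2 := by
      rw [hε]; field_simp; ring
    have hsqrt : Real.sqrt (ε*(θ₁^2-θ₀^2)+θ₁^2) = t := by
      rw [hsq, Real.sqrt_sq htpos.le]
    have hle := hb hmem
    have hval : ε*η - c ε = ε*(η - M/2*(θ₁-θ₀)) + M/2*(t - θ₁) := by
      simp only [c, hsqrt]; ring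
    have hA : 0 ≤ η - M/2*(θ₁-θ₀) := by linarith
    have h2b : 2*b/M + 1 ≤ t - θ₁ := by linarith
    have : b + M/2 ≤ ε*η - c ε := by
      rw [hval]
      have h1' : 0 ≤ ε*(η - M/2*(θ₁-θ₀)) := mul_nonneg hεnn hA
      have h2' : b + M/2 ≤ M/2*(t - θ₁) := by
        have := mul_le_mul_of_nonneg_left h2b (le_of_lt (half_pos hM))
        calc b + M/2 = M/2*(2*b/M+1) := by field_simp
          _ ≤ M/2*(t-θ₁) := this
      linarith
    linarith
end

section
/- Fix θ₁ > θ₀ > 0 and M > 0, let 𝓛(ε) = (M/2)·(θ₁ + (θ₁−θ₀)ε − √(θ₁² + (θ₁²−θ₀²)ε)), and let ε_η be the solution of 𝓛'(ε_η) = η for η < (θ₁−θ₀)²M/(4θ₁). Then 𝓛''(ε_η) = (−2η + (θ₁−θ₀)M)³ / ((θ₁²−θ₀²)M²). -/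
theorem second_derivative_at_tilting_point (θ₀ θ₁ M : ℝ)
    (h0 : 0 < θ₀) (h1 : θ₀ < θ₁) (hM : 0 < M)
    (L : ℝ → ℝ)
    (hL : L = fun ε : ℝ =>
      (M/2) * (θ₁ + (θ₁-θ₀)*ε - Real.sqrt (θ₁^2 + (θ₁^2-θ₀^2)*ε)))
    (η : ℝ) (hη : η < (θ₁-θ₀)^2*M/(4*θ₁))
    (ε : ℝ) (hε : -θ₁^2/(θ₁^2-θ₀^2) < ε) (hsol : deriv L ε = η) :
    deriv (deriv L) ε = (-2*η + (θ₁-θ₀)*M)^3 / ((θ₁^2-θ₀^2)*M^2) := by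
  set a := θ₁ - θ₀ with ha
  set c := θ₁^2 - θ₀^2 with hc
  have hcpos : 0 < c := by nlinarith
  have hapos : 0 < a := by linarith
  -- derivative of L on the open set
  have key : ∀ x : ℝ, 0 < θ₁^2 + c*x →
      HasDerivAt L ((M/2) * (a - c/(2*Real.sqrt (θ₁^2 + c*x)))) x := by
    intro x hx
    have h_inner : HasDerivAt (fun x : ℝ => θ₁^2 + c*x) c x := by
      simpa using ((hasDerivAt_id x).const_mul c).const_add (θ₁^2)
    have hsqrt : HasDerivAt (fun x : ℝ => Real.sqrt (θ₁^2 + c*x))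
        (1/(2*Real.sqrt (θ₁^2 + c*x)) * c) x :=
      (Real.hasDerivAt_sqrt hx.ne').comp x h_inner
    have hlin : HasDerivAt (fun x : ℝ => θ₁ + a*x) a x := by
      simpa using ((hasDerivAt_id x).const_mul a).const_add θ₁
    have := ((hlin.sub hsqrt).const_mul (M/2))
    rw [hL]
    exact this.congr_deriv (by ring)
  -- ε lies in the open set
  have hsε : 0 < θ₁^2 + c*ε := by
    have : -θ₁^2/c < ε := hε
    have := (div_lt_iff₀ hcpos).mp this
    nlinarith
  set g := Real.sqrt (θ₁^2 + c*ε) with hg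
  have hgpos : 0 < g := Real.sqrt_pos.mpr hsε
  have hgsq : g^2 = θ₁^2 + c*ε := Real.sq_sqrt hsε.le
  -- deriv L equals formula near ε
  have hopen : IsOpen {x : ℝ | 0 < θ₁^2 + c*x} :=
    isOpen_lt continuous_const (by continuity)
  have hev : deriv L =ᶠ[nhds ε]
      (fun x => (M/2) * (a - c/(2*Real.sqrt (θ₁^2 + c*x)))) := by
    filter_upwards [hopen.mem_nhds hsε] with x hx
    exact (key x hx).deriv
  -- derivative of the formula at ε
  have hD2 : HasDerivAt (fun x => (M/2) * (a - c/(2*Real.sqrt (θ₁^2 + c*x))))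
      (M * c^2 / (8 * g^3)) ε := by
    have h_inner : HasDerivAt (fun x : ℝ => θ₁^2 + c*x) c ε := by
      simpa using ((hasDerivAt_id ε).const_mul c).const_add (θ₁^2)
    have hsqrt : HasDerivAt (fun x : ℝ => Real.sqrt (θ₁^2 + c*x))
        (1/(2*g) * c) ε :=
      (Real.hasDerivAt_sqrt hsε.ne').comp ε h_inner
    have hinv := hsqrt.inv hgpos.ne'
    have h2 := (hinv.const_mul (c/2)).const_sub a
    have h3 := h2.const_mul (M/2)
    have hfun : (fun x => (M/2) * (a - c/(2*Real.sqrt (θ₁^2 + c*x))))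
        = (fun y => (M/2) * (a - c/2 * (Real.sqrt (θ₁^2 + c*y))⁻¹)) := by
      funext x; ring
    rw [hfun]
    refine h3.congr_deriv ?_
    rw [← hg]
    field_simp
    ring
  have hD2' : deriv (deriv L) ε = M * c^2 / (8 * g^3) := by
    rw [hev.deriv_eq]
    exact hD2.deriv
  -- solve for g from hsol
  have hsolval : (M/2) * (a - c/(2*g)) = η := by
    rw [← hsol, (key ε hsε).deriv]
  have hden : 0 < a*M - 2*η := by
    have h4 : η < a^2*M/(4*θ₁) := hη
    have h5 : a^2*M/(4*θ₁) < a*M/2 := by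
      rw [div_lt_div_iff₀ (by linarith) (by norm_num)]
      nlinarith [mul_pos (mul_pos hapos hM) (show (0:ℝ) < 4*θ₁ - 2*a by nlinarith)]
    nlinarith
  have hgval : g = c*M/(2*(a*M - 2*η)) := by
    have h6 : g * (a*M - 2*η) = c*M/2 := by
      field_simp at hsolval
      linear_combination hsolval / 2
    rw [eq_div_iff (mul_pos two_pos hden).ne']
    linear_combination 2 * h6
  rw [hD2', hgval]
  have hne : -2*η + a*M ≠ 0 := by linarith
  field_simp
  ring
end

section
/- Let λ_k, k ≥ 1, be positive reals with λ_k² ~ ϖ k^{2/d} as k → ∞ (ϖ > 0, d ≥ 1), let β > 0, σ > 0, θ > 0, T > 0, and set V_k = (σ²T/(2θ))λ_k^{2β} − (σ²/(4θ²))(1 − e^{−2θλ_k^{2β}T}) and M_N = Σ_{k=1}^N λ_k^{2β}. Then lim_{N→∞} M_N^{−1} Σ_{k=1}^N V_k = σ²T/(2θ). -/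
open Filter

lemma sum_div_tendsto_atTop (a : ℕ → ℝ) (h0 : ∀ k, 0 ≤ a k)
    (ha : Tendsto a atTop atTop) :
    Tendsto (fun N : ℕ => (∑ k ∈ Finset.Icc 1 N, a k) / (N:ℝ)) atTop atTop := by
  rw [tendsto_atTop]
  intro b
  set C := max b 1 with hC
  have hC1 : (1:ℝ) ≤ C := le_max_right _ _
  have hbC : b ≤ C := le_max_left _ _
  obtain ⟨K, hK⟩ := eventually_atTop.mp (ha.eventually_ge_atTop (2*C))
  set K' := max K 1 with hK'
  filter_upwards [eventually_ge_atTop (2*K')] with N hN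
  have hK'1 : 1 ≤ K' := le_max_right _ _
  have hKN : K' ≤ N := by omega
  have hsub : Finset.Icc K' N ⊆ Finset.Icc 1 N := Finset.Icc_subset_Icc_left hK'1
  have h1 : ∑ _k ∈ Finset.Icc K' N, (2*C) ≤ ∑ k ∈ Finset.Icc K' N, a k := by
    apply Finset.sum_le_sum
    intro k hk
    exact hK k (le_trans (le_max_left _ _) (Finset.mem_Icc.mp hk).1)
  have h2 : ∑ k ∈ Finset.Icc K' N, a k ≤ ∑ k ∈ Finset.Icc 1 N, a k :=
    Finset.sum_le_sum_of_subset_of_nonneg hsub (fun k _ _ => h0 k)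
  have h3 : ∑ _k ∈ Finset.Icc K' N, (2*C) = ((N + 1 - K' : ℕ) : ℝ) * (2*C) := by
    rw [Finset.sum_const, Nat.card_Icc, nsmul_eq_mul]
  have hNpos : (0:ℝ) < N := by
    have : 2 ≤ N := by omega
    exact_mod_cast by omega
  rw [le_div_iff₀ hNpos]
  have hhalf : (N:ℝ) ≤ 2 * ((N + 1 - K' : ℕ) : ℝ) := by
    have : N ≤ 2 * (N + 1 - K') := by omega
    exact_mod_cast this
  have hCpos : (0:ℝ) < C := lt_of_lt_of_le one_pos hC1
  calc b * N ≤ C * N := by nlinarith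
    _ ≤ ((N + 1 - K' : ℕ) : ℝ) * (2*C) := by nlinarith
    _ ≤ ∑ k ∈ Finset.Icc 1 N, a k := by rw [← h3]; exact le_trans h1 h2

theorem cesaro_variance_limit (lam : ℕ → ℝ) (hpos : ∀ k, 0 < lam k)
    (ϖ : ℝ) (hϖ : 0 < ϖ) (d : ℕ) (hd : 1 ≤ d)
    (hasym : Tendsto (fun k : ℕ => (lam k)^2 / (k:ℝ)^((2:ℝ)/(d:ℝ))) atTop (nhds ϖ))
    (β σ θ T : ℝ) (hβ : 0 < β) (hσ : 0 < σ) (hθ : 0 < θ) (hT : 0 < T) :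
    Tendsto (fun N : ℕ =>
        (∑ k ∈ Finset.Icc 1 N,
          ((σ^2*T/(2*θ)) * (lam k)^(2*β)
            - (σ^2/(4*θ^2)) * (1 - Real.exp (-2*θ*(lam k)^(2*β)*T))))
          / (∑ k ∈ Finset.Icc 1 N, (lam k)^(2*β)))
      atTop (nhds (σ^2*T/(2*θ))) := by
  set a : ℕ → ℝ := fun k => (lam k)^(2*β) with ha_def
  have hdpos : (0:ℝ) < (d:ℝ) := by exact_mod_cast hd
  have hapos : ∀ k, 0 < a k := fun k => Real.rpow_pos_of_pos (hpos k) _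
  -- a tends to atTop
  have hlam2 : Tendsto (fun k : ℕ => (lam k)^2) atTop atTop := by
    have h1 : Tendsto (fun k : ℕ => ((k:ℝ))^((2:ℝ)/(d:ℝ))) atTop atTop :=
      (tendsto_rpow_atTop (by positivity)).comp tendsto_natCast_atTop_atTop
    have h2 : Tendsto (fun k : ℕ => ((lam k)^2 / (k:ℝ)^((2:ℝ)/(d:ℝ))) * (k:ℝ)^((2:ℝ)/(d:ℝ)))
        atTop atTop := hasym.pos_mul_atTop hϖ h1
    apply h2.congr'
    filter_upwards [eventually_ge_atTop 1] with k hk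
    have hkpos : (0:ℝ) < (k:ℝ) := by exact_mod_cast hk
    field_simp
  have haT : Tendsto a atTop atTop := by
    have := (tendsto_rpow_atTop hβ).comp hlam2
    apply this.congr
    intro k
    simp only [Function.comp]
    rw [ha_def]
    rw [← Real.rpow_natCast (lam k) 2, ← Real.rpow_mul (hpos k).le]
    norm_num
  -- N / S N → 0
  have hS : Tendsto (fun N : ℕ => (∑ k ∈ Finset.Icc 1 N, a k) / (N:ℝ)) atTop atTop :=
    sum_div_tendsto_atTop a (fun k => (hapos k).le) haT
  have hNS : Tendsto (fun N : ℕ => (N:ℝ) / (∑ k ∈ Finset.Icc 1 N, a k)) atTop (nhds 0) := by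
    have := hS.inv_tendsto_atTop
    apply this.congr'
    filter_upwards [eventually_ge_atTop 1] with N hN
    have hNpos : (0:ℝ) < N := by exact_mod_cast hN
    simp only [Pi.inv_apply, inv_div]
  -- R/S → 0
  have hSpos : ∀ N, 1 ≤ N → 0 < ∑ k ∈ Finset.Icc 1 N, a k := by
    intro N hN
    apply Finset.sum_pos (fun k _ => hapos k)
    exact ⟨1, Finset.mem_Icc.mpr ⟨le_refl 1, hN⟩⟩
  set R : ℕ → ℝ := fun N => ∑ k ∈ Finset.Icc 1 N, (1 - Real.exp (-2*θ*(a k)*T)) with hR_def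
  have hRnn : ∀ N, 0 ≤ R N := by
    intro N
    apply Finset.sum_nonneg
    intro k _
    have : Real.exp (-2*θ*(a k)*T) ≤ 1 := by
      rw [Real.exp_le_one_iff]
      have := mul_pos (mul_pos hθ (hapos k)) hT
      nlinarith
    linarith
  have hRle : ∀ N, R N ≤ N := by
    intro N
    calc R N ≤ ∑ _k ∈ Finset.Icc 1 N, (1:ℝ) := by
          apply Finset.sum_le_sum
          intro k _
          have := Real.exp_pos (-2*θ*(a k)*T)
          linarith
      _ = N := by simp
  have hRS : Tendsto (fun N : ℕ => R N / (∑ k ∈ Finset.Icc 1 N, a k)) atTop (nhds 0) := by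
    apply tendsto_of_tendsto_of_tendsto_of_le_of_le' tendsto_const_nhds hNS
    · filter_upwards [eventually_ge_atTop 1] with N hN
      exact div_nonneg (hRnn N) (hSpos N hN).le
    · filter_upwards [eventually_ge_atTop 1] with N hN
      have hs := hSpos N hN
      gcongr
      exact hRle N
  have hfinal : Tendsto (fun N : ℕ => σ^2*T/(2*θ)
      - σ^2/(4*θ^2) * (R N / ∑ k ∈ Finset.Icc 1 N, a k)) atTop (nhds (σ^2*T/(2*θ))) := by
    have h := (tendsto_const_nhds (x := σ^2*T/(2*θ)) (f := atTop (α := ℕ))).sub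
      (hRS.const_mul (σ^2/(4*θ^2)))
    simpa using h
  apply hfinal.congr'
  filter_upwards [eventually_ge_atTop 1] with N hN
  have hSne := (hSpos N hN).ne'
  have hsum : ∑ k ∈ Finset.Icc 1 N,
      ((σ^2*T/(2*θ)) * (lam k)^(2*β)
        - (σ^2/(4*θ^2)) * (1 - Real.exp (-2*θ*(lam k)^(2*β)*T)))
      = (σ^2*T/(2*θ)) * (∑ k ∈ Finset.Icc 1 N, a k) - (σ^2/(4*θ^2)) * R N := by
    rw [Finset.sum_sub_distrib, ← Finset.mul_sum, ← Finset.mul_sum]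
  rw [hsum]
  field_simp
end
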